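/- Let A be an n×n real matrix such that A + Aᵀ is negative definite, and let p_1,…,p_{n−1} ≥ 0. Then for every feasible matrix M of the associated semidefinite program (i.e., M ⪰ 0 with ⟨A_i, M⟩ = −p_i for i = 1,…,n−1), one has ⟨A_n, M⟩ ≤ p_1 + p_2 + ⋯ + p_{n−1}. In particular the objective of the semidefinite program is bounded above. (This uses that A_1 + A_2 + ⋯ + A_n = A + Aᵀ and that ⟨B, M⟩ ≥ 0 whenever B is positive definite and M ⪰ 0.) -/

import Mathlib

open Matrix

/-- Trace inner product on square matrices: ⟨X, Y⟩ = tr(XY). -/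
noncomputable def ip {m : ℕ} (X Y : Matrix (Fin m) (Fin m) ℝ) : ℝ := (X * Y).trace

/-- For an m×m matrix `A`, the symmetric matrix `A_i = e_i a_iᵀ + a_i e_iᵀ`,
whose i-th row and column equal the i-th row of `A` (with (i,i) entry `2 A i i`),
all other entries zero. -/
noncomputable def sdpMat {m : ℕ} (A : Matrix (Fin m) (Fin m) ℝ) (i : Fin m) :
    Matrix (Fin m) (Fin m) ℝ :=
  Matrix.of fun k l => (if k = i then A i l else 0) + (if l = i then A i k else 0)

/-- Feasibility for the semidefinite program associated to an (n+1)×(n+1) matrix `A`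
and data `p`: `M ⪰ 0` and `⟨A_i, M⟩ = -p_i` for every non-final index `i`. -/
def Feasible {n : ℕ} (A : Matrix (Fin (n + 1)) (Fin (n + 1)) ℝ)
    (p : Fin (n + 1) → ℝ) (M : Matrix (Fin (n + 1)) (Fin (n + 1)) ℝ) : Prop :=
  M.PosSemidef ∧ ∀ i : Fin (n + 1), i ≠ Fin.last n → ip (sdpMat A i) M = -(p i)

lemma psd_trace_nonneg {m : ℕ} {M : Matrix (Fin m) (Fin m) ℝ} (h : M.PosSemidef) :
    0 ≤ M.trace := by
  rw [Matrix.trace]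
  apply Finset.sum_nonneg
  intro k _
  exact h.diag_nonneg

open scoped MatrixOrder in
lemma trace_mul_nonneg {m : ℕ} {P M : Matrix (Fin m) (Fin m) ℝ}
    (hP : P.PosSemidef) (hM : M.PosSemidef) : 0 ≤ (P * M).trace := by
  have hC : (CFC.sqrt M).PosSemidef := (CFC.sqrt_nonneg M).posSemidef
  have hCC : CFC.sqrt M * CFC.sqrt M = M := CFC.sqrt_mul_sqrt_self M hM.nonneg
  have hherm : (CFC.sqrt M)ᴴ = CFC.sqrt M := hC.1
  have key : ((CFC.sqrt M)ᴴ * P * CFC.sqrt M).trace = (P * M).trace := by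
    rw [Matrix.trace_mul_cycle, hherm, hCC, Matrix.trace_mul_comm]
  rw [← key]
  exact psd_trace_nonneg (hP.conjTranspose_mul_mul_same (CFC.sqrt M))

lemma sum_sdpMat {m : ℕ} (A : Matrix (Fin m) (Fin m) ℝ) :
    ∑ i, sdpMat A i = A + Aᵀ := by
  ext k l
  simp [sdpMat, Matrix.sum_apply, Finset.sum_add_distrib, Finset.sum_ite_eq, Matrix.transpose_apply]

/-- Every feasible matrix `M` of the associated semidefinite program satisfies
`⟨A_n, M⟩ ≤ p₁ + ⋯ + p_{n-1}`; the objective is bounded above. -/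
theorem sdp_objective_bounded (n : ℕ)
    (A : Matrix (Fin (n + 1)) (Fin (n + 1)) ℝ)
    (hA : (-(A + Aᵀ)).PosDef)
    (p : Fin (n + 1) → ℝ) (hp : ∀ i : Fin (n + 1), i ≠ Fin.last n → 0 ≤ p i) :
    ∀ M, Feasible A p M →
      ip (sdpMat A (Fin.last n)) M ≤ ∑ i ∈ Finset.univ.erase (Fin.last n), p i := by
  intro M hM
  obtain ⟨hpsd, hcon⟩ := hM
  have hsum : ∑ i, ip (sdpMat A i) M = ip (A + Aᵀ) M := by
    unfold ip
    rw [← Matrix.trace_sum, ← Finset.sum_mul, sum_sdpMat]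
  have hsplit : ∑ i ∈ Finset.univ.erase (Fin.last n), ip (sdpMat A i) M
      + ip (sdpMat A (Fin.last n)) M = ∑ i, ip (sdpMat A i) M :=
    Finset.sum_erase_add _ _ (Finset.mem_univ _)
  have herase : ∑ i ∈ Finset.univ.erase (Fin.last n), ip (sdpMat A i) M
      = ∑ i ∈ Finset.univ.erase (Fin.last n), -(p i) := by
    apply Finset.sum_congr rfl
    intro i hi
    exact hcon i (Finset.ne_of_mem_erase hi)
  have hneg : ip (A + Aᵀ) M ≤ 0 := by
    have h0 : 0 ≤ ((-(A + Aᵀ)) * M).trace := trace_mul_nonneg hA.posSemidef hpsd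
    unfold ip
    rw [Matrix.neg_mul, Matrix.trace_neg] at h0
    linarith
  rw [herase, Finset.sum_neg_distrib] at hsplit
  linarith [hsplit, hsum, hneg]
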